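/- For every real number β with 0 ≤ β < 1 there exists a constant C > 0 with the following property: for every complex inner product space H, all vectors a, b ∈ H, and every real number W ≥ 0 satisfying Re⟨a, b⟩ ≥ W − (β + 1)·√W·‖b‖, one has ‖a‖² + ‖b‖² + W ≤ C·‖a + b‖². -/

import Mathlib

set_option maxHeartbeats 1000000 in
/-- Abstract analytic core of Lemma 4.1: for every `0 ≤ β < 1` there is a constant
`C > 0` such that for every complex inner product space `H`, all `a b : H`, and every
real `W ≥ 0` with `Re⟪a, b⟫ ≥ W - (β + 1) √W ‖b‖`, one has
`‖a‖² + ‖b‖² + W ≤ C ‖a + b‖²`. -/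
theorem abstract_coercive_estimate (β : ℝ) (hβ0 : 0 ≤ β) (hβ1 : β < 1) :
    ∃ C : ℝ, 0 < C ∧
      ∀ (H : Type) [NormedAddCommGroup H] [InnerProductSpace ℂ H]
        (a b : H) (W : ℝ), 0 ≤ W →
        W - (β + 1) * Real.sqrt W * ‖b‖ ≤ (inner ℂ a b : ℂ).re →
        ‖a‖ ^ 2 + ‖b‖ ^ 2 + W ≤ C * ‖a + b‖ ^ 2 := by
  obtain ⟨η, hηdef⟩ : ∃ η : ℝ, η = 1 - (β + 1) ^ 2 / 4 := ⟨_, rfl⟩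
  have hβ4 : (β + 1) ^ 2 ≤ 4 := by nlinarith
  have hβ4' : (β + 1) ^ 2 < 4 := by nlinarith
  have hη0 : 0 < η := by rw [hηdef]; linarith
  have hη1 : η ≤ 1 := by rw [hηdef]; nlinarith [sq_nonneg (β + 1)]
  have hη2le : η ^ 2 ≤ 1 := by nlinarith
  have hc2le : (1 - η) ^ 2 ≤ 1 := by nlinarith
  refine ⟨12 + 18 / η ^ 2, by positivity, ?_⟩
  intro H _ _ a b W hW hr
  set x := ‖a‖ with hxdef
  set y := ‖b‖ with hydef
  have hx : 0 ≤ x := norm_nonneg a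
  have hy : 0 ≤ y := norm_nonneg b
  set w := Real.sqrt W with hwdef
  have hw0 : 0 ≤ w := Real.sqrt_nonneg W
  have hW2 : W = w ^ 2 := (Real.sq_sqrt hW).symm
  set r := (inner ℂ a b : ℂ).re with hrdef
  have hcs : |r| ≤ x * y := by
    calc |r| ≤ ‖(inner ℂ a b : ℂ)‖ := Complex.abs_re_le_norm _
    _ ≤ x * y := norm_inner_le_norm a b
  have hcs1 : r ≤ x * y := (abs_le.mp hcs).2
  have hcs2 : -(x * y) ≤ r := (abs_le.mp hcs).1
  set s2 := ‖a + b‖ ^ 2 with hs2def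
  have hs : s2 = x ^ 2 + 2 * r + y ^ 2 := by
    rw [hs2def, @norm_add_sq ℂ]
    norm_num [hrdef, hxdef, hydef]
  have hr' : w ^ 2 - (β + 1) * w * y ≤ r := by rw [hW2] at hr; linarith
  have h2 : (η - 1) * y ^ 2 ≤ r := by
    have he : (η - 1) * y ^ 2 = -((β + 1) ^ 2 / 4 * y ^ 2) := by rw [hηdef]; ring
    nlinarith [sq_nonneg (w - (β + 1) * y / 2)]
  have h3 : w ^ 2 ≤ 2 * r + 4 * y ^ 2 := by
    nlinarith [sq_nonneg (w - (β + 1) * y),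
      mul_le_mul_of_nonneg_right hβ4 (sq_nonneg y)]
  have hs2nn : 0 ≤ s2 := by positivity
  have hA : (x - (1 - η) * y) ^ 2 + η ^ 2 * y ^ 2 ≤ s2 := by
    nlinarith [mul_nonneg (by linarith : (0:ℝ) ≤ 1 - η)
        (by linarith : (0:ℝ) ≤ 2 * r + 2 * (x * y)),
      mul_nonneg hη0.le (by linarith : (0:ℝ) ≤ 2 * r - 2 * (η - 1) * y ^ 2)]
  have hy2 : η ^ 2 * y ^ 2 ≤ s2 := by nlinarith [sq_nonneg (x - (1 - η) * y)]
  have hA1 : (x - (1 - η) * y) ^ 2 ≤ s2 := by nlinarith [sq_nonneg (η * y)]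
  have hxb : x ^ 2 ≤ 2 * (x - (1 - η) * y) ^ 2 + 2 * (1 - η) ^ 2 * y ^ 2 := by
    nlinarith [sq_nonneg (x - 2 * (1 - η) * y)]
  have hx2 : η ^ 2 * x ^ 2 ≤ 4 * s2 := by
    nlinarith [mul_le_mul_of_nonneg_left hxb (sq_nonneg η),
      mul_le_mul_of_nonneg_left hA1 (sq_nonneg η),
      mul_le_mul_of_nonneg_right hy2 (sq_nonneg (1 - η)),
      mul_le_mul_of_nonneg_right hη2le hs2nn,
      mul_le_mul_of_nonneg_right hc2le hs2nn]
  have hw2 : η ^ 2 * w ^ 2 ≤ 9 * s2 := by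
    nlinarith [mul_le_mul_of_nonneg_left h3 (sq_nonneg η),
      mul_le_mul_of_nonneg_left hcs1 (sq_nonneg η),
      mul_nonneg (sq_nonneg η) (sq_nonneg (x - y)), hx2, hy2]
  have key : x ^ 2 + y ^ 2 + w ^ 2 ≤ (12 * η ^ 2 + 18) * s2 / η ^ 2 := by
    rw [le_div_iff₀ (by positivity : (0:ℝ) < η ^ 2)]
    nlinarith [hx2, hy2, hw2, mul_le_mul_of_nonneg_right hη2le hs2nn]
  have heq : (12 + 18 / η ^ 2) * s2 = (12 * η ^ 2 + 18) * s2 / η ^ 2 := by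
    field_simp
  rw [hW2, heq]
  exact key
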